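/- Let f be a continuous complex-valued function on [a,b] and h: [0,∞) → [0,∞) be a nondecreasing function such that |f(x) − f(y)| ≤ h(|x − y|) for all x, y ∈ [a,b]. Then for every nonzero real λ, |∫_a^b f(x) e^{iλx} dx| ≤ 3(b − a) h(1/|λ|) + (2/|λ|) sup_{x ∈ [a,b]} |f(x)|. -/

import Mathlib

open MeasureTheory Set

/-- Rate of convergence in the Riemann–Lebesgue lemma for a continuous function
with modulus of continuity `h`. -/
theorem fourier_decay_modulus_of_continuity
    (a b : ℝ) (hab : a < b) (f : ℝ → ℂ) (hf : ContinuousOn f (Icc a b))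
    (h : ℝ → ℝ) (hmono : MonotoneOn h (Ici 0)) (hnonneg : ∀ x, 0 ≤ x → 0 ≤ h x)
    (hmod : ∀ x ∈ Icc a b, ∀ y ∈ Icc a b, ‖f x - f y‖ ≤ h |x - y|)
    (l : ℝ) (hl : l ≠ 0) :
    ‖∫ x in a..b, f x * Complex.exp (Complex.I * l * x)‖ ≤
      3 * (b - a) * h |l|⁻¹ + 2 * |l|⁻¹ * sSup ((fun x => ‖f x‖) '' Icc a b) := by
  have hlpos : 0 < |l| := abs_pos.mpr hl
  set δ : ℝ := |l|⁻¹ with hδdef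
  have hδpos : 0 < δ := inv_pos.mpr hlpos
  have hba : 0 < b - a := sub_pos.mpr hab
  set n : ℕ := ⌈(b - a) / δ⌉₊ with hndef
  have hnpos : 0 < n := Nat.ceil_pos.mpr (div_pos hba hδpos)
  have hnR : (0:ℝ) < n := Nat.cast_pos.mpr hnpos
  set s : ℝ := (b - a) / n with hsdef
  have hspos : 0 < s := div_pos hba hnR
  have hsδ : s ≤ δ := by
    rw [hsdef, div_le_iff₀ hnR]
    calc b - a = (b - a) / δ * δ := by field_simp
    _ ≤ n * δ := by gcongr; exact Nat.le_ceil _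
    _ = δ * n := mul_comm _ _
  have hns : (n : ℝ) * s = b - a := by have := hnR.ne'; rw [hsdef]; field_simp
  -- the partition points
  set x : ℕ → ℝ := fun j => a + j * s with hxdef
  have hx0 : x 0 = a := by simp [hxdef]
  have hxn : x n = b := by
    simp only [hxdef]
    rw [hns]; ring
  have hxstep : ∀ j : ℕ, x (j+1) - x j = s := by
    intro j; simp only [hxdef]; push_cast; ring
  have hxle : ∀ j : ℕ, x j ≤ x (j+1) := by
    intro j; nlinarith [hxstep j]
  have hxmem : ∀ j : ℕ, j ≤ n → x j ∈ Icc a b := by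
    intro j hj
    constructor
    · have : 0 ≤ (j:ℝ) * s := by positivity
      simp only [hxdef]; linarith
    · have : (j:ℝ) * s ≤ n * s := by
        have : (j:ℝ) ≤ n := Nat.cast_le.mpr hj
        nlinarith
      simp only [hxdef]; linarith [hns]
  have hsub : ∀ i : ℕ, i < n → Icc (x i) (x (i+1)) ⊆ Icc a b := by
    intro i hi
    exact Icc_subset_Icc (hxmem i hi.le).1 (hxmem (i+1) hi).2
  -- the integrand
  set F : ℝ → ℂ := fun y => f y * Complex.exp (Complex.I * l * y) with hFdef
  have hecont : Continuous fun y : ℝ => Complex.exp (Complex.I * l * y) := by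
    fun_prop
  have hFcont : ContinuousOn F (Icc a b) := hf.mul hecont.continuousOn
  have hFint : ∀ i : ℕ, i < n → IntervalIntegrable F volume (x i) (x (i+1)) := by
    intro i hi
    apply ContinuousOn.intervalIntegrable
    rw [uIcc_of_le (hxle i)]
    exact hFcont.mono (hsub i hi)
  have hsplit : (∫ y in a..b, F y) = ∑ i ∈ Finset.range n, ∫ y in x i..x (i+1), F y := by
    rw [intervalIntegral.sum_integral_adjacent_intervals hFint, hx0, hxn]
  -- notation
  set E : ℕ → ℂ := fun j => Complex.exp (Complex.I * l * x j) with hEdef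
  set c : ℕ → ℂ := fun j => f (x j) with hcdef
  set A : ℕ → ℂ := fun i => ∫ y in x i..x (i+1), (f y - c i) * Complex.exp (Complex.I * l * y)
    with hAdef
  have hIl : (Complex.I * l : ℂ) ≠ 0 := by
    apply mul_ne_zero Complex.I_ne_zero
    exact_mod_cast hl
  have hnorme : ∀ y : ℝ, ‖Complex.exp (Complex.I * l * y)‖ = 1 := by
    intro y
    rw [Complex.norm_exp]
    simp
  have hnormE : ∀ j, ‖E j‖ = 1 := fun j => hnorme (x j)
  -- decomposition of each piece
  have hdec : ∀ i : ℕ, i < n → (∫ y in x i..x (i+1), F y)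
      = A i + c i * ((E (i+1) - E i) / (Complex.I * l)) := by
    intro i hi
    have hexp : (∫ y in x i..x (i+1), Complex.exp (Complex.I * ↑l * ↑y))
        = (E (i+1) - E i) / (Complex.I * l) := by
      rw [integral_exp_mul_complex hIl]
    have h1 : IntervalIntegrable (fun y => (f y - c i) * Complex.exp (Complex.I * l * y))
        volume (x i) (x (i+1)) := by
      apply ContinuousOn.intervalIntegrable
      rw [uIcc_of_le (hxle i)]
      exact ((hf.mono (hsub i hi)).sub continuousOn_const).mul hecont.continuousOn
    have h2 : IntervalIntegrable (fun y => c i * Complex.exp (Complex.I * l * y))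
        volume (x i) (x (i+1)) := (hecont.intervalIntegrable _ _).const_mul _
    calc (∫ y in x i..x (i+1), F y)
        = ∫ y in x i..x (i+1), ((f y - c i) * Complex.exp (Complex.I * l * y)
            + c i * Complex.exp (Complex.I * l * y)) := by
          apply intervalIntegral.integral_congr
          intro y _
          simp only [hFdef]
          ring
      _ = A i + ∫ y in x i..x (i+1), c i * Complex.exp (Complex.I * l * y) :=
          intervalIntegral.integral_add h1 h2
      _ = A i + c i * ((E (i+1) - E i) / (Complex.I * l)) := by
          rw [intervalIntegral.integral_const_mul, hexp]
  -- sup bound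
  set M : ℝ := sSup ((fun x => ‖f x‖) '' Icc a b) with hMdef
  have hbdd : BddAbove ((fun x => ‖f x‖) '' Icc a b) :=
    (isCompact_Icc.image_of_continuousOn hf.norm).bddAbove
  have hMle : ∀ j : ℕ, j ≤ n → ‖c j‖ ≤ M := by
    intro j hj
    exact le_csSup hbdd ⟨x j, hxmem j hj, rfl⟩
  have hM0 : 0 ≤ M := le_trans (norm_nonneg _) (hMle 0 (Nat.zero_le _))
  have hhδ0 : 0 ≤ h δ := hnonneg δ hδpos.le
  -- bound on A i
  have hAbound : ∀ i : ℕ, i < n → ‖A i‖ ≤ h δ * s := by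
    intro i hi
    have : ‖A i‖ ≤ h δ * |x (i+1) - x i| := by
      apply intervalIntegral.norm_integral_le_of_norm_le_const
      intro y hy
      rw [uIoc_of_le (hxle i)] at hy
      have hyI : y ∈ Icc a b := hsub i hi ⟨hy.1.le, hy.2⟩
      have hxiI : x i ∈ Icc a b := hxmem i hi.le
      have hd1 : |y - x i| ≤ s := by
        rw [abs_of_nonneg (by linarith [hy.1.le] : (0:ℝ) ≤ y - x i)]
        linarith [hy.2, hxstep i]
      calc ‖(f y - c i) * Complex.exp (Complex.I * l * y)‖
          = ‖f y - f (x i)‖ := by rw [norm_mul, hnorme, mul_one]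
        _ ≤ h |y - x i| := hmod y hyI (x i) hxiI
        _ ≤ h δ := hmono (mem_Ici.mpr (abs_nonneg _)) hδpos.le (hd1.trans hsδ)
    rwa [hxstep i, abs_of_pos hspos] at this
  -- modulus bound on c differences
  have hcdiff : ∀ i : ℕ, i + 1 ≤ n → ‖c (i+1) - c i‖ ≤ h δ := by
    intro i hi
    calc ‖c (i+1) - c i‖ ≤ h |x (i+1) - x i| :=
          hmod _ (hxmem (i+1) hi) _ (hxmem i (by omega))
      _ = h s := by rw [hxstep i, abs_of_pos hspos]
      _ ≤ h δ := hmono hspos.le hδpos.le hsδ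
  -- Abel summation
  have htel : ∀ k : ℕ, (∑ i ∈ Finset.range k, (E (i+1) - E i)) = E k - E 0 :=
    fun k => Finset.sum_range_sub E k
  have habel : (∑ i ∈ Finset.range n, c i * (E (i+1) - E i))
      = c (n-1) * (E n - E 0)
        - ∑ i ∈ Finset.range (n-1), (c (i+1) - c i) * (E (i+1) - E 0) := by
    have := Finset.sum_range_by_parts c (fun i => E (i+1) - E i) n
    simp only [smul_eq_mul, htel] at this
    exact this
  have hE2 : ∀ j k : ℕ, ‖E j - E k‖ ≤ 2 := by
    intro j k
    calc ‖E j - E k‖ ≤ ‖E j‖ + ‖E k‖ := norm_sub_le _ _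
      _ = 2 := by rw [hnormE, hnormE]; norm_num
  have habelbound : ‖∑ i ∈ Finset.range n, c i * (E (i+1) - E i)‖
      ≤ 2 * M + (n-1 : ℕ) * (2 * h δ) := by
    rw [habel]
    calc ‖c (n-1) * (E n - E 0) - ∑ i ∈ Finset.range (n-1), (c (i+1) - c i) * (E (i+1) - E 0)‖
        ≤ ‖c (n-1) * (E n - E 0)‖
          + ‖∑ i ∈ Finset.range (n-1), (c (i+1) - c i) * (E (i+1) - E 0)‖ := norm_sub_le _ _
      _ ≤ M * 2 + (n-1 : ℕ) * (2 * h δ) := by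
          gcongr ?_ + ?_
          · rw [norm_mul]
            exact mul_le_mul (hMle _ (by omega)) (hE2 _ _) (norm_nonneg _) hM0
          · calc ‖∑ i ∈ Finset.range (n-1), (c (i+1) - c i) * (E (i+1) - E 0)‖
                ≤ ∑ i ∈ Finset.range (n-1), ‖(c (i+1) - c i) * (E (i+1) - E 0)‖ :=
                  norm_sum_le _ _
              _ ≤ ∑ i ∈ Finset.range (n-1), 2 * h δ := by
                  apply Finset.sum_le_sum
                  intro i hi
                  rw [norm_mul]
                  have hi' : i + 1 ≤ n := by
                    have := Finset.mem_range.mp hi; omega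
                  calc ‖c (i+1) - c i‖ * ‖E (i+1) - E 0‖ ≤ h δ * 2 :=
                        mul_le_mul (hcdiff i hi') (hE2 _ _) (norm_nonneg _) hhδ0
                    _ = 2 * h δ := by ring
              _ = (n-1 : ℕ) * (2 * h δ) := by
                  rw [Finset.sum_const, Finset.card_range, nsmul_eq_mul]
      _ = 2 * M + (n-1 : ℕ) * (2 * h δ) := by ring
  -- put everything together
  have hmain : (∫ y in a..b, F y)
      = (∑ i ∈ Finset.range n, A i)
        + (∑ i ∈ Finset.range n, c i * (E (i+1) - E i)) / (Complex.I * l) := by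
    rw [hsplit, Finset.sum_congr rfl (fun i hi => hdec i (Finset.mem_range.mp hi)),
      Finset.sum_add_distrib, Finset.sum_div]
    congr 1
    apply Finset.sum_congr rfl
    intro i _
    rw [mul_div_assoc]
  have hnormIl : ‖(Complex.I * l : ℂ)‖ = |l| := by
    rw [norm_mul, Complex.norm_I, one_mul, Complex.norm_real, Real.norm_eq_abs]
  have hn1 : ((n - 1 : ℕ) : ℝ) * δ ≤ b - a := by
    have h1 : ((n - 1 : ℕ) : ℝ) = (n : ℝ) - 1 := by
      have : 1 ≤ n := hnpos
      push_cast [this]; ring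
    have h2 : (n : ℝ) < (b - a) / δ + 1 := Nat.ceil_lt_add_one (by positivity)
    rw [h1]
    calc ((n:ℝ) - 1) * δ ≤ (b - a) / δ * δ := by nlinarith
      _ = b - a := by field_simp
  calc ‖∫ y in a..b, F y‖
      ≤ ‖∑ i ∈ Finset.range n, A i‖
        + ‖∑ i ∈ Finset.range n, c i * (E (i+1) - E i)‖ / ‖(Complex.I * l : ℂ)‖ := by
        rw [hmain]
        refine (norm_add_le _ _).trans ?_
        rw [norm_div]
    _ ≤ (n : ℝ) * (h δ * s) + (2 * M + (n-1 : ℕ) * (2 * h δ)) * δ := by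
        gcongr ?_ + ?_
        · calc ‖∑ i ∈ Finset.range n, A i‖ ≤ ∑ i ∈ Finset.range n, ‖A i‖ := norm_sum_le _ _
            _ ≤ ∑ i ∈ Finset.range n, h δ * s := Finset.sum_le_sum
                (fun i hi => hAbound i (Finset.mem_range.mp hi))
            _ = (n : ℝ) * (h δ * s) := by
                rw [Finset.sum_const, Finset.card_range, nsmul_eq_mul]
        · rw [hnormIl, div_eq_mul_inv]
          exact mul_le_mul_of_nonneg_right habelbound hδpos.le
    _ ≤ 3 * (b - a) * h δ + 2 * δ * M := by
        have h1 : (n : ℝ) * (h δ * s) = (b - a) * h δ := by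
          rw [← hns]; ring
        have h2 : ((n-1 : ℕ) : ℝ) * (2 * h δ) * δ ≤ 2 * ((b - a) * h δ) := by
          nlinarith [hn1, (Nat.cast_nonneg (n-1) : (0:ℝ) ≤ ((n-1:ℕ):ℝ))]
        nlinarith
    _ = 3 * (b - a) * h δ + 2 * δ * M := rfl
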